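/- For real numbers a > -1 and b > 0, the integral over (0, ∞) of 1/(b x^4 + 2 a x^2 + 1) dx equals π / (2√2 · √(a + √b)). -/

import Mathlib

open Real MeasureTheory Set

-- Step A: ∫ (u²+c)⁻¹ over ℝ = π/√c
lemma integral_inv_sq_add_const {c : ℝ} (hc : 0 < c) :
    ∫ u : ℝ, (u ^ 2 + c)⁻¹ = π / Real.sqrt c := by
  have hs : 0 < Real.sqrt c := Real.sqrt_pos.mpr hc
  have hsc : Real.sqrt c ^ 2 = c := Real.sq_sqrt hc.le
  have h1 : ∀ u : ℝ, (u ^ 2 + c)⁻¹ = c⁻¹ * (1 + (u / Real.sqrt c) ^ 2)⁻¹ := by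
    intro u
    rw [div_pow, ← hsc]
    rw [hsc]
    field_simp
    linear_combination (-u ^ 2) * hsc
  simp_rw [h1]
  rw [integral_const_mul,
    MeasureTheory.Measure.integral_comp_div (fun x : ℝ => (1 + x ^ 2)⁻¹) (Real.sqrt c),
    integral_univ_inv_one_add_sq, abs_of_pos hs, smul_eq_mul]
  rw [eq_div_iff hs.ne']
  field_simp
  linear_combination hsc

lemma key_integral {p : ℝ} (hp : -1 < p) :
    ∫ x in Ioi (0:ℝ), 1 / (x ^ 4 + 2 * p * x ^ 2 + 1) =
      π / (2 * Real.sqrt 2 * Real.sqrt (p + 1)) := by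
  set c : ℝ := 2 * (p + 1) with hc_def
  have hc : 0 < c := by simp only [hc_def]; linarith
  set g : ℝ → ℝ := fun u => (u ^ 2 + c)⁻¹ with hg_def
  have hgpos : ∀ u : ℝ, 0 < u ^ 2 + c := fun u => by positivity
  have hgcont : Continuous g := by
    apply Continuous.inv₀ (by continuity)
    intro u; exact (hgpos u).ne'
  -- substitution x ↦ x - x⁻¹
  have hderiv : ∀ x ∈ Ioi (0:ℝ), HasDerivWithinAt (fun x : ℝ => x - x⁻¹)
      (1 + (x ^ 2)⁻¹) (Ioi 0) x := by
    intro x hx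
    have hx0 : x ≠ 0 := (mem_Ioi.mp hx).ne'
    have := ((hasDerivAt_id x).fun_sub (hasDerivAt_inv hx0))
    simpa [sub_neg_eq_add] using this.hasDerivWithinAt
  have hmono : StrictMonoOn (fun x : ℝ => x - x⁻¹) (Ioi 0) := by
    intro x hx y hy hxy
    exact sub_lt_sub hxy (inv_strictAnti₀ (mem_Ioi.mp hx) hxy)
  have hinj : InjOn (fun x : ℝ => x - x⁻¹) (Ioi 0) := hmono.injOn
  have himage : (fun x : ℝ => x - x⁻¹) '' Ioi 0 = univ := by
    ext u
    simp only [mem_image, mem_univ, iff_true]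
    have h4 : (0:ℝ) < u ^ 2 + 4 := by positivity
    set s := Real.sqrt (u ^ 2 + 4) with hs_def
    have hs2 : s ^ 2 = u ^ 2 + 4 := Real.sq_sqrt h4.le
    have habs : |u| < s := by
      rw [hs_def, ← Real.sqrt_sq_eq_abs]
      exact Real.sqrt_lt_sqrt (sq_nonneg u) (by linarith)
    have hxpos : 0 < (u + s) / 2 := by
      have := neg_abs_le u
      linarith
    refine ⟨(u + s) / 2, hxpos, ?_⟩
    have hmul : (u + s) / 2 * ((u + s) / 2 - u) = 1 := by
      linear_combination (1/4 : ℝ) * hs2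
    have hinv := eq_inv_of_mul_eq_one_right hmul
    show (u + s) / 2 - ((u + s) / 2)⁻¹ = u
    linarith [hinv]
  -- change of variables
  have hCV := integral_image_eq_integral_abs_deriv_smul measurableSet_Ioi hderiv hinj g
  rw [himage, Measure.restrict_univ] at hCV
  have habs_eq : ∀ x ∈ Ioi (0:ℝ),
      |1 + (x ^ 2)⁻¹| • g (x - x⁻¹) = (1 + (x ^ 2)⁻¹) * g (x - x⁻¹) := by
    intro x hx
    rw [smul_eq_mul, abs_of_pos (by positivity)]
  rw [setIntegral_congr_fun measurableSet_Ioi habs_eq] at hCV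
  rw [integral_inv_sq_add_const hc] at hCV
  -- integrability
  have hInt : IntegrableOn (fun x => (1 + (x ^ 2)⁻¹) * g (x - x⁻¹)) (Ioi 0) := by
    have hgInt : Integrable g := by
      have h1 : g = fun u : ℝ => c⁻¹ * (1 + (u / Real.sqrt c) ^ 2)⁻¹ := by
        funext u
        have hsc : Real.sqrt c ^ 2 = c := Real.sq_sqrt hc.le
        show (u ^ 2 + c)⁻¹ = _
        rw [div_pow, ← hsc]
        rw [hsc]
        field_simp
        linear_combination (-u ^ 2) * hsc
      rw [h1]
      exact (integrable_inv_one_add_sq.comp_div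
        (Real.sqrt_pos.mpr hc).ne').const_mul _
    have := (integrableOn_image_iff_integrableOn_abs_deriv_smul
      measurableSet_Ioi hderiv hinj g).mp (by rw [himage]; exact hgInt.integrableOn)
    exact this.congr_fun habs_eq measurableSet_Ioi
  have hmeasG : AEStronglyMeasurable (fun x => g (x - x⁻¹)) (volume.restrict (Ioi 0)) := by
    apply ContinuousOn.aestronglyMeasurable ?_ measurableSet_Ioi
    exact hgcont.comp_continuousOn
      (continuousOn_id.sub (continuousOn_inv₀.mono (fun x hx => (mem_Ioi.mp hx).ne')))
  have hg_nonneg : ∀ u : ℝ, 0 ≤ g u := fun u => inv_nonneg.mpr (hgpos u).le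
  have hIg2 : IntegrableOn (fun x => g (x - x⁻¹)) (Ioi 0) := by
    apply MeasureTheory.Integrable.mono hInt hmeasG
    filter_upwards [ae_restrict_mem measurableSet_Ioi] with x hx
    have h1 : (0:ℝ) < 1 + (x ^ 2)⁻¹ := by
      have : (0:ℝ) < x := hx
      positivity
    rw [Real.norm_eq_abs, Real.norm_eq_abs, abs_of_nonneg (hg_nonneg _),
      abs_of_nonneg (mul_nonneg h1.le (hg_nonneg _))]
    nlinarith [hg_nonneg (x - x⁻¹), sq_nonneg x, inv_nonneg.mpr (sq_nonneg x)]
  have hmeas1 : AEStronglyMeasurable (fun x : ℝ => (x ^ 2)⁻¹ * g (x - x⁻¹))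
      (volume.restrict (Ioi 0)) := by
    apply ContinuousOn.aestronglyMeasurable ?_ measurableSet_Ioi
    apply ContinuousOn.mul
    · exact ((continuous_pow 2).continuousOn.inv₀
        (fun x hx => pow_ne_zero 2 (mem_Ioi.mp hx).ne'))
    · exact hgcont.comp_continuousOn
        (continuousOn_id.sub (continuousOn_inv₀.mono (fun x hx => (mem_Ioi.mp hx).ne')))
  have hIg1 : IntegrableOn (fun x => (x ^ 2)⁻¹ * g (x - x⁻¹)) (Ioi 0) := by
    apply MeasureTheory.Integrable.mono hInt hmeas1
    filter_upwards [ae_restrict_mem measurableSet_Ioi] with x hx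
    have hxp : (0:ℝ) < x := hx
    have h1 : (0:ℝ) < 1 + (x ^ 2)⁻¹ := by positivity
    rw [Real.norm_eq_abs, Real.norm_eq_abs,
      abs_of_nonneg (mul_nonneg (by positivity) (hg_nonneg _)),
      abs_of_nonneg (mul_nonneg h1.le (hg_nonneg _))]
    nlinarith [hg_nonneg (x - x⁻¹), inv_nonneg.mpr (sq_nonneg x)]
  -- substitution x ↦ x⁻¹
  have hderiv2 : ∀ x ∈ Ioi (0:ℝ), HasDerivWithinAt (fun x : ℝ => x⁻¹)
      (-(x ^ 2)⁻¹) (Ioi 0) x := fun x hx =>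
    (hasDerivAt_inv (mem_Ioi.mp hx).ne').hasDerivWithinAt
  have hinj2 : InjOn (fun x : ℝ => x⁻¹) (Ioi 0) := fun x _ y _ h => inv_injective h
  have himage2 : (fun x : ℝ => x⁻¹) '' Ioi 0 = Ioi 0 := by
    ext x
    constructor
    · rintro ⟨y, hy, rfl⟩; exact inv_pos.mpr (mem_Ioi.mp hy)
    · intro hx; exact ⟨x⁻¹, mem_Ioi.mpr (inv_pos.mpr (mem_Ioi.mp hx)), inv_inv x⟩
  have hCV2 := integral_image_eq_integral_abs_deriv_smul measurableSet_Ioi hderiv2 hinj2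
    (fun y => g (y - y⁻¹))
  rw [himage2] at hCV2
  have heq2 : ∀ x ∈ Ioi (0:ℝ),
      |(-(x ^ 2)⁻¹)| • g (x⁻¹ - (x⁻¹)⁻¹) = (x ^ 2)⁻¹ * g (x - x⁻¹) := by
    intro x hx
    rw [smul_eq_mul, abs_neg, abs_of_nonneg (inv_nonneg.mpr (sq_nonneg x)), inv_inv]
    congr 1
    show ((x⁻¹ - x) ^ 2 + c)⁻¹ = ((x - x⁻¹) ^ 2 + c)⁻¹
    rw [← neg_sub x x⁻¹, neg_sq]
  rw [setIntegral_congr_fun measurableSet_Ioi heq2] at hCV2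
  -- combine
  have hsum : ∫ x in Ioi (0:ℝ), (1 + (x ^ 2)⁻¹) * g (x - x⁻¹)
      = (∫ x in Ioi (0:ℝ), g (x - x⁻¹)) + ∫ x in Ioi (0:ℝ), (x ^ 2)⁻¹ * g (x - x⁻¹) := by
    rw [← integral_add hIg2 hIg1]
    refine setIntegral_congr_fun measurableSet_Ioi fun x hx => ?_
    ring
  have hI : ∫ x in Ioi (0:ℝ), (x ^ 2)⁻¹ * g (x - x⁻¹) = π / (2 * Real.sqrt c) := by
    have hs : 0 < Real.sqrt c := Real.sqrt_pos.mpr hc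
    have h2 : π / Real.sqrt c = 2 * ∫ x in Ioi (0:ℝ), (x ^ 2)⁻¹ * g (x - x⁻¹) := by
      rw [hCV, hsum, hCV2]; ring
    field_simp at h2 ⊢
    linarith
  -- identify integrand
  have hfinal : ∫ x in Ioi (0:ℝ), 1 / (x ^ 4 + 2 * p * x ^ 2 + 1)
      = ∫ x in Ioi (0:ℝ), (x ^ 2)⁻¹ * g (x - x⁻¹) := by
    refine setIntegral_congr_fun measurableSet_Ioi fun x hx => ?_
    have hx0 : (0:ℝ) < x := hx
    have hd : x ^ 2 * ((x - x⁻¹) ^ 2 + c) = x ^ 4 + 2 * p * x ^ 2 + 1 := by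
      rw [hc_def]
      field_simp
      ring
    show 1 / (x ^ 4 + 2 * p * x ^ 2 + 1) = (x ^ 2)⁻¹ * ((x - x⁻¹) ^ 2 + c)⁻¹
    rw [one_div, ← hd, mul_inv]
  rw [hfinal, hI]
  congr 1
  rw [hc_def, Real.sqrt_mul (by norm_num : (0:ℝ) ≤ 2)]
  ring

theorem quartic_integral_base (a b : ℝ) (ha : -1 < a) (hb : 0 < b)
    (hab : 0 < a + Real.sqrt b) :
    ∫ x in Set.Ioi (0 : ℝ), 1 / (b * x ^ 4 + 2 * a * x ^ 2 + 1) =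
      π / (2 * Real.sqrt 2 * Real.sqrt (a + Real.sqrt b)) := by
  set r : ℝ := b ^ ((1:ℝ)/4) with hr_def
  have hr : 0 < r := Real.rpow_pos_of_pos hb _
  have hr4 : r ^ 4 = b := by
    rw [hr_def, ← Real.rpow_natCast (b ^ ((1:ℝ)/4)) 4, ← Real.rpow_mul hb.le]
    norm_num
  have hr2 : r ^ 2 = Real.sqrt b := by
    rw [hr_def, ← Real.rpow_natCast (b ^ ((1:ℝ)/4)) 2, ← Real.rpow_mul hb.le,
      Real.sqrt_eq_rpow]
    norm_num
  have hsb : 0 < Real.sqrt b := Real.sqrt_pos.mpr hb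
  have hp : -1 < a / Real.sqrt b := by
    rw [lt_div_iff₀ hsb]; linarith
  have key := key_integral hp
  have hcongr : ∀ x : ℝ, 1 / (b * x ^ 4 + 2 * a * x ^ 2 + 1)
      = (fun t => 1 / (t ^ 4 + 2 * (a / Real.sqrt b) * t ^ 2 + 1)) (r * x) := by
    intro x
    show _ = 1 / ((r * x) ^ 4 + 2 * (a / Real.sqrt b) * (r * x) ^ 2 + 1)
    congr 1
    rw [mul_pow, mul_pow, hr4, hr2]
    field_simp
  simp_rw [hcongr]
  rw [MeasureTheory.integral_comp_mul_left_Ioi (fun t => 1 / (t ^ 4 + 2 * (a / Real.sqrt b) * t ^ 2 + 1)) 0 hr, mul_zero, key, smul_eq_mul]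
  have hx : Real.sqrt (a / Real.sqrt b + 1) * r = Real.sqrt (a + Real.sqrt b) := by
    rw [← Real.sqrt_sq hr.le, ← Real.sqrt_mul (by linarith : (0:ℝ) ≤ a / Real.sqrt b + 1)]
    congr 1
    rw [hr2]
    field_simp
  rw [← hx]
  have h1 : Real.sqrt (a / Real.sqrt b + 1) ≠ 0 := by
    have : (0:ℝ) < a / Real.sqrt b + 1 := by linarith
    positivity
  have h2 : Real.sqrt 2 ≠ 0 := by positivity
  field_simp
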